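/- For every integer k ≥ 2, every greedy defining set of (L_k, lex) has cardinality at least 6n²/16 = (3/8)·4^k, where n = 2^k is the order of L_k. -/

import Mathlib

open SimpleGraph

/-- First-Fit (greedy) coloring of `G` with respect to the vertex ordering given by the
injective position function `ord` (vertex `u` comes before `v` iff `ord u < ord v`).
Each vertex receives the smallest positive integer not used on earlier neighbors. -/
noncomputable def firstFit {V : Type*} (G : SimpleGraph V) (ord : V → ℕ) : V → ℕ :=
  (InvImage.wf ord Nat.lt_wfRel.wf).fix
    (fun v ih => sInf {c : ℕ | 1 ≤ c ∧ ∀ u, ∀ h : ord u < ord v, G.Adj u v → ih u h ≠ c})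

/-- `FFColors G ord` is the number of colors used by the First-Fit coloring. -/
noncomputable def FFColors {V : Type*} [Fintype V] (G : SimpleGraph V) (ord : V → ℕ) : ℕ :=
  (Finset.univ.image (firstFit G ord)).card

open Classical in
/-- First-Fit coloring of `(G, ord)` subject to the pre-coloring `C₀` on the set `S`:
vertices of `S` keep their pre-assigned colors and are skipped by the scan; every other
vertex receives the smallest positive integer not already assigned (or pre-assigned)
to a neighbor. -/
noncomputable def firstFitWith {V : Type*} (G : SimpleGraph V) (ord : V → ℕ)
    (S : Set V) (C₀ : V → ℕ) : V → ℕ :=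
  (InvImage.wf ord Nat.lt_wfRel.wf).fix
    (fun v ih =>
      if v ∈ S then C₀ v
      else sInf {c : ℕ | 1 ≤ c ∧ (∀ u, G.Adj u v → u ∈ S → C₀ u ≠ c) ∧
        ∀ u, ∀ h : ord u < ord v, G.Adj u v → u ∉ S → ih u h ≠ c})

/-- Position function of the lexicographic order on `V × W` induced by the position
functions `σ` on `V` and `σ'` on `W` (for injective `σ, σ'`: `(u,v)` comes before
`(u',v')` iff `σ u < σ u'`, or `u = u'` and `σ' v < σ' v'`). -/
noncomputable def lexPos {V W : Type*} [Fintype W] (σ : V → ℕ) (σ' : W → ℕ) : V × W → ℕ :=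
  fun p => σ p.1 * (Finset.univ.sup σ' + 1) + σ' p.2

/-- A proper coloring with colors in the positive integers. -/
def IsProperColoring {V : Type*} (G : SimpleGraph V) (C : V → ℕ) : Prop :=
  (∀ v, 1 ≤ C v) ∧ ∀ ⦃u v⦄, G.Adj u v → C u ≠ C v

/-- `D` is a `(C, ord)`-descent: `D = {v} ∪ N` where `C v = y`, `x < y` is a (positive)
color, `N` is the set of neighbors of `v` of color `x`, and every `u ∈ N` comes after
`v` in the order. -/
def IsDescent {V : Type*} (G : SimpleGraph V) (ord : V → ℕ) (C : V → ℕ) (D : Set V) : Prop :=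
  ∃ v x, 1 ≤ x ∧ x < C v ∧
    (∀ u, G.Adj u v → C u = x → ord v < ord u) ∧
    D = insert v {u | G.Adj u v ∧ C u = x}

/-- The Grundy number: the maximum of `FFColors G ord` over all vertex orderings. -/
noncomputable def grundy {V : Type*} [Fintype V] (G : SimpleGraph V) : ℕ :=
  sSup {n | ∃ ord : V → ℕ, Function.Injective ord ∧ FFColors G ord = n}

/-- The independence number of `G`. -/
noncomputable def indepNum {V : Type*} [Fintype V] (G : SimpleGraph V) : ℕ :=
  sSup {n | ∃ s : Finset V, (∀ u ∈ s, ∀ v ∈ s, ¬ G.Adj u v) ∧ s.card = n}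

/-- An `m × n` Latin rectangle: entries in `{1, …, n}`, no repeats in rows or columns. -/
def IsLatinRectangle {m n : ℕ} (R : Fin m → Fin n → ℕ) : Prop :=
  (∀ i j, R i j ∈ Finset.Icc 1 n) ∧ (∀ i, Function.Injective (R i)) ∧
    (∀ j, Function.Injective (fun i => R i j))

/-- `S` is a greedy defining set of the rectangle `R` (cells scanned in lexicographic,
i.e. row-by-row, order): the greedy completion, which skips the cells of `S` (fixed to
their values in `R`) and places in each other cell the smallest positive integer not yet
appearing in its row or column, reproduces `R`.  This is First-Fit on the rook's graph
`K_m □ K_n` subject to the pre-coloring of `S` by `R`. -/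
noncomputable def IsRectGDS {m n : ℕ} (R : Fin m → Fin n → ℕ) (S : Set (Fin m × Fin n)) : Prop :=
  firstFitWith ((⊤ : SimpleGraph (Fin m)).boxProd (⊤ : SimpleGraph (Fin n)))
    (lexPos Fin.val Fin.val) S (fun p => R p.1 p.2) = fun p => R p.1 p.2

/-- The Latin square `L_k` of order `2^k`: the entry in row `i`, column `j` is
`2^k - (i XOR j)`; equivalently the `k`-fold tensor product of `[[2,1],[1,2]]`. -/
def Lsquare (k : ℕ) : Fin (2 ^ k) → Fin (2 ^ k) → ℕ :=
  fun i j => 2 ^ k - (i.val ^^^ j.val)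

open Classical in
lemma firstFitWith_eq {V : Type*} (G : SimpleGraph V) (ord : V → ℕ)
    (S : Set V) (C₀ : V → ℕ) (v : V) :
    firstFitWith G ord S C₀ v =
      if v ∈ S then C₀ v
      else sInf {c : ℕ | 1 ≤ c ∧ (∀ u, G.Adj u v → u ∈ S → C₀ u ≠ c) ∧
        ∀ u, ord u < ord v → G.Adj u v → u ∉ S → firstFitWith G ord S C₀ u ≠ c} := by
  exact WellFounded.fix_eq _ _ v

lemma ffw_blocked {V : Type*} (G : SimpleGraph V) (ord : V → ℕ) (S : Set V) (C₀ : V → ℕ)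
    (hFF : firstFitWith G ord S C₀ = C₀) (v : V) (hv : v ∉ S) (c : ℕ) (h1 : 1 ≤ c)
    (hc : c < C₀ v) : ∃ u, G.Adj u v ∧ C₀ u = c ∧ (u ∈ S ∨ ord u < ord v) := by
  have key : C₀ v = sInf {c : ℕ | 1 ≤ c ∧ (∀ u, G.Adj u v → u ∈ S → C₀ u ≠ c) ∧
      ∀ u, ord u < ord v → G.Adj u v → u ∉ S → C₀ u ≠ c} := by
    conv_lhs => rw [← hFF]
    rw [firstFitWith_eq, if_neg hv]
    simp only [hFF]
  have hnot : ¬ (1 ≤ c ∧ (∀ u, G.Adj u v → u ∈ S → C₀ u ≠ c) ∧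
      ∀ u, ord u < ord v → G.Adj u v → u ∉ S → C₀ u ≠ c) := by
    intro hmem
    have hle : sInf {c : ℕ | 1 ≤ c ∧ (∀ u, G.Adj u v → u ∈ S → C₀ u ≠ c) ∧
        ∀ u, ord u < ord v → G.Adj u v → u ∉ S → C₀ u ≠ c} ≤ c := Nat.sInf_le hmem
    omega
  by_contra hcon
  push_neg at hcon
  apply hnot
  refine ⟨h1, fun u hadj huS hcu => ?_, fun u hord hadj huS hcu => ?_⟩
  · exact ((hcon u hadj hcu).1 huS).elim
  · have := (hcon u hadj hcu).2
    omega

def Hits (n : ℕ) (S : Finset (ℕ × ℕ)) : Prop :=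
  ∀ i j t : ℕ, i < n → j < n → t < n → i ^^^ j < t → j < i ^^^ t → i < j ^^^ t →
    ((i, j) ∈ S ∨ (i, i ^^^ t) ∈ S ∨ (j ^^^ t, j) ∈ S)

lemma gds_hits (k : ℕ) (S : Finset (Fin (2 ^ k) × Fin (2 ^ k)))
    (hS : IsRectGDS (Lsquare k) ↑S) :
    Hits (2 ^ k) (S.image (fun p => (p.1.val, p.2.val))) := by
  classical
  intro i j t hi hj ht h1 h2 h3
  have hxij : i ^^^ j < 2 ^ k := Nat.xor_lt_two_pow hi hj
  have hxit : i ^^^ t < 2 ^ k := Nat.xor_lt_two_pow hi ht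
  have hxjt : j ^^^ t < 2 ^ k := Nat.xor_lt_two_pow hj ht
  by_cases hvS : ((⟨i, hi⟩, ⟨j, hj⟩) : Fin (2 ^ k) × Fin (2 ^ k)) ∈ S
  · exact Or.inl (Finset.mem_image.mpr ⟨_, hvS, rfl⟩)
  have hvS' : ((⟨i, hi⟩, ⟨j, hj⟩) : Fin (2 ^ k) × Fin (2 ^ k)) ∉
      (↑S : Set (Fin (2 ^ k) × Fin (2 ^ k))) := by simpa using hvS
  have hFF : firstFitWith ((⊤ : SimpleGraph (Fin (2 ^ k))).boxProd (⊤ : SimpleGraph (Fin (2 ^ k))))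
      (lexPos Fin.val Fin.val) (↑S) (fun p => Lsquare k p.1 p.2) = fun p => Lsquare k p.1 p.2 := hS
  have hblock := ffw_blocked _ _ _ _ hFF ((⟨i, hi⟩, ⟨j, hj⟩) : Fin (2 ^ k) × Fin (2 ^ k)) hvS'
      (2 ^ k - t) (by omega) (by simp only [Lsquare]; omega)
  obtain ⟨u, hadj, hcu, hor⟩ := hblock
  rw [SimpleGraph.boxProd_adj] at hadj
  rcases hadj with ⟨hne, h2eq⟩ | ⟨hne, h1eq⟩
  · -- same column j : u is the column mate (j ^^^ t, j)
    have hval : u.1.val ^^^ j = t := by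
      have he : Lsquare k u.1 u.2 = 2 ^ k - (u.1.val ^^^ j) := by
        simp only [Lsquare]
        congr 2
        rw [h2eq]
      have hb : u.1.val ^^^ j < 2 ^ k := Nat.xor_lt_two_pow u.1.isLt hj
      rw [he] at hcu
      omega
    have hu1 : u.1.val = j ^^^ t := by
      rw [← hval, Nat.xor_comm u.1.val j, xor_cancel_left]
    rcases hor with huS | hord
    · refine Or.inr (Or.inr (Finset.mem_image.mpr ⟨u, by simpa using huS, ?_⟩))
      rw [hu1, h2eq]
    · exfalso
      simp only [lexPos] at hord
      rw [h2eq] at hord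
      simp only at hord
      have hmul : u.1.val * (Finset.univ.sup (Fin.val : Fin (2 ^ k) → ℕ) + 1) <
          i * (Finset.univ.sup (Fin.val : Fin (2 ^ k) → ℕ) + 1) := by omega
      have := Nat.lt_of_mul_lt_mul_right hmul
      omega
  · -- same row i : u is the row mate (i, i ^^^ t)
    have hval : i ^^^ u.2.val = t := by
      have he : Lsquare k u.1 u.2 = 2 ^ k - (i ^^^ u.2.val) := by
        simp only [Lsquare]
        congr 2
        rw [h1eq]
      have hb : i ^^^ u.2.val < 2 ^ k := Nat.xor_lt_two_pow hi u.2.isLt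
      rw [he] at hcu
      omega
    have hu2 : u.2.val = i ^^^ t := by rw [← hval, xor_cancel_left]
    rcases hor with huS | hord
    · refine Or.inr (Or.inl (Finset.mem_image.mpr ⟨u, by simpa using huS, ?_⟩))
      rw [hu2, h1eq]
    · exfalso
      simp only [lexPos] at hord
      rw [h1eq] at hord
      simp only at hord
      omega

set_option maxHeartbeats 4000000 in
lemma base_bool : ∀ x00 x01 x10 : Bool, (x00 || x01 || x10) →
    ∀ x22 x23 x32 : Bool, (x22 || x23 || x32) →
    ∀ x02 x20 : Bool, (x00 || x02 || x20) →
    ∀ x11 x13 x31 : Bool, (x11 || x13 || x31) → (x01 || x02 || x31) → (x10 || x13 || x20) →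
    ∀ x03 x12 : Bool, (x02 || x03 || x12) →
    ∀ x21 x30 : Bool, (x20 || x21 || x30) → (x01 || x03 || x21) →
    (x10 || x12 || x30) → (x00 || x03 || x30) → (x11 || x12 || x21) →
    6 ≤ (cond x00 1 0) + (cond x01 1 0) + (cond x02 1 0) + (cond x03 1 0) +
        (cond x10 1 0) + (cond x11 1 0) + (cond x12 1 0) + (cond x13 1 0) +
        (cond x20 1 0) + (cond x21 1 0) + (cond x22 1 0) + (cond x23 1 0) +
        (cond x30 1 0) + (cond x31 1 0) + (cond x32 1 0) := by decide

lemma hits_four (S : Finset (ℕ × ℕ)) (h : Hits 4 S) : 6 ≤ S.card := by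
  classical
  -- the 12 triples
  have T1 := h 0 0 1 (by decide) (by decide) (by decide) (by decide) (by decide) (by decide)
  have T2 := h 2 2 1 (by decide) (by decide) (by decide) (by decide) (by decide) (by decide)
  have T3 := h 0 0 2 (by decide) (by decide) (by decide) (by decide) (by decide) (by decide)
  have T4 := h 1 1 2 (by decide) (by decide) (by decide) (by decide) (by decide) (by decide)
  have T5 := h 0 1 2 (by decide) (by decide) (by decide) (by decide) (by decide) (by decide)
  have T6 := h 1 0 2 (by decide) (by decide) (by decide) (by decide) (by decide) (by decide)
  have T7 := h 0 2 3 (by decide) (by decide) (by decide) (by decide) (by decide) (by decide)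
  have T8 := h 2 0 3 (by decide) (by decide) (by decide) (by decide) (by decide) (by decide)
  have T9 := h 0 1 3 (by decide) (by decide) (by decide) (by decide) (by decide) (by decide)
  have T10 := h 1 0 3 (by decide) (by decide) (by decide) (by decide) (by decide) (by decide)
  have T11 := h 0 0 3 (by decide) (by decide) (by decide) (by decide) (by decide) (by decide)
  have T12 := h 1 1 3 (by decide) (by decide) (by decide) (by decide) (by decide) (by decide)
  norm_num at T1 T2 T3 T4 T5 T6 T7 T8 T9 T10 T11 T12
  -- the 15 relevant cells
  set C : Finset (ℕ × ℕ) := {(0,0),(0,1),(0,2),(0,3),(1,0),(1,1),(1,2),(1,3),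
    (2,0),(2,1),(2,2),(2,3),(3,0),(3,1),(3,2)} with hC
  have hsub : C.filter (· ∈ S) ⊆ S := fun p hp => (Finset.mem_filter.mp hp).2
  have hcard : (C.filter (· ∈ S)).card = ∑ p ∈ C, if p ∈ S then 1 else 0 :=
    Finset.card_filter _ _
  have hsum : 6 ≤ ∑ p ∈ C, if p ∈ S then 1 else 0 := by
    have hb := base_bool ((0,0) ∈ S) ((0,1) ∈ S) ((1,0) ∈ S) (by simp only [Bool.or_eq_true, decide_eq_true_eq, or_assoc]; exact T1)
      ((2,2) ∈ S) ((2,3) ∈ S) ((3,2) ∈ S) (by simp only [Bool.or_eq_true, decide_eq_true_eq, or_assoc]; exact T2)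
      ((0,2) ∈ S) ((2,0) ∈ S) (by simp only [Bool.or_eq_true, decide_eq_true_eq, or_assoc]; exact T3)
      ((1,1) ∈ S) ((1,3) ∈ S) ((3,1) ∈ S) (by simp only [Bool.or_eq_true, decide_eq_true_eq, or_assoc]; exact T4) (by simp only [Bool.or_eq_true, decide_eq_true_eq, or_assoc]; exact T5) (by simp only [Bool.or_eq_true, decide_eq_true_eq, or_assoc]; exact T6)
      ((0,3) ∈ S) ((1,2) ∈ S) (by simp only [Bool.or_eq_true, decide_eq_true_eq, or_assoc]; exact T7)
      ((2,1) ∈ S) ((3,0) ∈ S) (by simp only [Bool.or_eq_true, decide_eq_true_eq, or_assoc]; exact T8) (by simp only [Bool.or_eq_true, decide_eq_true_eq, or_assoc]; exact T9)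
      (by simp only [Bool.or_eq_true, decide_eq_true_eq, or_assoc]; exact T10) (by simp only [Bool.or_eq_true, decide_eq_true_eq, or_assoc]; exact T11) (by simp only [Bool.or_eq_true, decide_eq_true_eq, or_assoc]; exact T12)
    simp only [Bool.cond_decide] at hb
    rw [hC]
    rw [Finset.sum_insert (by decide), Finset.sum_insert (by decide),
      Finset.sum_insert (by decide), Finset.sum_insert (by decide),
      Finset.sum_insert (by decide), Finset.sum_insert (by decide),
      Finset.sum_insert (by decide), Finset.sum_insert (by decide),
      Finset.sum_insert (by decide), Finset.sum_insert (by decide),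
      Finset.sum_insert (by decide), Finset.sum_insert (by decide),
      Finset.sum_insert (by decide), Finset.sum_insert (by decide),
      Finset.sum_singleton]
    omega
  calc 6 ≤ (C.filter (· ∈ S)).card := by omega
    _ ≤ S.card := Finset.card_le_card hsub

lemma two_pow_add_eq_xor {K x : ℕ} (hx : x < 2 ^ K) : 2 ^ K + x = 2 ^ K ^^^ x := by
  apply Nat.eq_of_testBit_eq
  intro i
  rcases lt_trichotomy i K with h | h | h
  · rw [Nat.testBit_two_pow_add_gt h, Nat.testBit_xor,
      Nat.testBit_two_pow_of_ne (Nat.ne_of_gt h)]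
    simp
  · subst h
    rw [Nat.testBit_two_pow_add_eq, Nat.testBit_xor, Nat.testBit_two_pow_self,
      Nat.testBit_eq_false_of_lt hx]
    simp [Nat.testBit_eq_false_of_lt hx]
  · have h1 : 2 ^ K + x < 2 ^ i := by
      calc 2 ^ K + x < 2 ^ K + 2 ^ K := by omega
        _ = 2 ^ (K + 1) := by ring
        _ ≤ 2 ^ i := Nat.pow_le_pow_right (by norm_num) h
    rw [Nat.testBit_eq_false_of_lt h1, Nat.testBit_xor,
      Nat.testBit_two_pow_of_ne (Nat.ne_of_lt h),
      Nat.testBit_eq_false_of_lt (lt_of_lt_of_le (lt_of_lt_of_le hx (Nat.pow_le_pow_right (by norm_num) (le_of_lt h))) le_rfl)]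
    simp

lemma xor_hh {K x y : ℕ} (hx : x < 2 ^ K) (hy : y < 2 ^ K) :
    (2 ^ K + x) ^^^ (2 ^ K + y) = x ^^^ y := by
  rw [two_pow_add_eq_xor hx, two_pow_add_eq_xor hy, Nat.xor_comm (2 ^ K) x,
    Nat.xor_assoc, xor_cancel_left]

lemma xor_hl {K x y : ℕ} (hx : x < 2 ^ K) (hy : y < 2 ^ K) :
    (2 ^ K + x) ^^^ y = 2 ^ K + (x ^^^ y) := by
  rw [two_pow_add_eq_xor hx, Nat.xor_assoc,
    ← two_pow_add_eq_xor (Nat.xor_lt_two_pow hx hy)]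

lemma xor_lh {K x y : ℕ} (hx : x < 2 ^ K) (hy : y < 2 ^ K) :
    x ^^^ (2 ^ K + y) = 2 ^ K + (x ^^^ y) := by
  rw [Nat.xor_comm, xor_hl hy hx, Nat.xor_comm y x]

lemma hits_q1 {K : ℕ} {S : Finset (ℕ × ℕ)} (h : Hits (2 ^ (K + 1)) S) :
    Hits (2 ^ K) (S.filter (fun p => p.1 < 2 ^ K ∧ p.2 < 2 ^ K)) := by
  intro i j t hi hj ht h1 h2 h3
  have hbig : (2:ℕ) ^ K < 2 ^ (K + 1) := by
    have := Nat.pow_lt_pow_right (a := 2) (by norm_num) (Nat.lt_succ_self K)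
    simpa using this
  have hx := Nat.xor_lt_two_pow hi ht
  have hy := Nat.xor_lt_two_pow hj ht
  rcases h i j t (by omega) (by omega) (by omega) h1 h2 h3 with H | H | H
  · exact Or.inl (Finset.mem_filter.mpr ⟨H, hi, hj⟩)
  · exact Or.inr (Or.inl (Finset.mem_filter.mpr ⟨H, hi, hx⟩))
  · exact Or.inr (Or.inr (Finset.mem_filter.mpr ⟨H, hy, hj⟩))

lemma hits_q2 {K : ℕ} {S : Finset (ℕ × ℕ)} (h : Hits (2 ^ (K + 1)) S) :
    Hits (2 ^ K) ((S.filter (fun p => 2 ^ K ≤ p.1 ∧ 2 ^ K ≤ p.2)).image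
      (fun p => (p.1 - 2 ^ K, p.2 - 2 ^ K))) := by
  intro i j t hi hj ht h1 h2 h3
  have ht2 : t < 2 ^ (K + 1) := by
    have : (2:ℕ) ^ K ≤ 2 ^ (K+1) := Nat.pow_le_pow_right (by norm_num) (by omega)
    omega
  have hx := Nat.xor_lt_two_pow hi ht
  have hy := Nat.xor_lt_two_pow hj ht
  have hp2 : (2:ℕ) ^ (K + 1) = 2 ^ K + 2 ^ K := by ring
  have key := h (2 ^ K + i) (2 ^ K + j) t (by omega) (by omega) (by omega)
    (by rwa [xor_hh hi hj]) (by rw [xor_hl hi ht]; omega) (by rw [xor_hl hj ht]; omega)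
  rw [xor_hl hi ht, xor_hl hj ht] at key
  rcases key with H | H | H
  · refine Or.inl (Finset.mem_image.mpr ⟨_, Finset.mem_filter.mpr ⟨H, by simp, by simp⟩, ?_⟩)
    simp
  · refine Or.inr (Or.inl (Finset.mem_image.mpr
      ⟨_, Finset.mem_filter.mpr ⟨H, by simp, by simp⟩, ?_⟩))
    simp
  · refine Or.inr (Or.inr (Finset.mem_image.mpr
      ⟨_, Finset.mem_filter.mpr ⟨H, by simp, by simp⟩, ?_⟩))
    simp

lemma hits_q3 {K : ℕ} {S : Finset (ℕ × ℕ)} (h : Hits (2 ^ (K + 1)) S) :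
    Hits (2 ^ K) ((S.filter (fun p => p.1 < 2 ^ K ∧ 2 ^ K ≤ p.2)).image
      (fun p => (p.1, p.2 - 2 ^ K))) := by
  intro i j t hi hj ht h1 h2 h3
  have hx := Nat.xor_lt_two_pow hi ht
  have hy := Nat.xor_lt_two_pow hj ht
  have hp2 : (2:ℕ) ^ (K + 1) = 2 ^ K + 2 ^ K := by ring
  have key := h i (2 ^ K + j) (2 ^ K + t) (by omega) (by omega) (by omega)
    (by rw [xor_lh hi hj]; omega)
    (by rw [xor_lh hi ht]; omega) (by rw [xor_hh hj ht]; omega)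
  rw [xor_lh hi ht, xor_hh hj ht] at key
  rcases key with H | H | H
  · refine Or.inl (Finset.mem_image.mpr ⟨_, Finset.mem_filter.mpr ⟨H, hi, by simp⟩, ?_⟩)
    simp
  · refine Or.inr (Or.inl (Finset.mem_image.mpr
      ⟨_, Finset.mem_filter.mpr ⟨H, hi, by simp⟩, ?_⟩))
    simp
  · refine Or.inr (Or.inr (Finset.mem_image.mpr
      ⟨_, Finset.mem_filter.mpr ⟨H, hy, by simp⟩, ?_⟩))
    simp

lemma hits_q4 {K : ℕ} {S : Finset (ℕ × ℕ)} (h : Hits (2 ^ (K + 1)) S) :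
    Hits (2 ^ K) ((S.filter (fun p => 2 ^ K ≤ p.1 ∧ p.2 < 2 ^ K)).image
      (fun p => (p.1 - 2 ^ K, p.2))) := by
  intro i j t hi hj ht h1 h2 h3
  have hx := Nat.xor_lt_two_pow hi ht
  have hy := Nat.xor_lt_two_pow hj ht
  have hp2 : (2:ℕ) ^ (K + 1) = 2 ^ K + 2 ^ K := by ring
  have key := h (2 ^ K + i) j (2 ^ K + t) (by omega) (by omega) (by omega)
    (by rw [xor_hl hi hj]; omega) (by rw [xor_hh hi ht]; omega)
    (by rw [xor_lh hj ht]; omega)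
  rw [xor_hh hi ht, xor_lh hj ht] at key
  rcases key with H | H | H
  · refine Or.inl (Finset.mem_image.mpr ⟨_, Finset.mem_filter.mpr ⟨H, by simp, hj⟩, ?_⟩)
    simp
  · refine Or.inr (Or.inl (Finset.mem_image.mpr
      ⟨_, Finset.mem_filter.mpr ⟨H, by simp, hx⟩, ?_⟩))
    simp
  · refine Or.inr (Or.inr (Finset.mem_image.mpr
      ⟨_, Finset.mem_filter.mpr ⟨H, by simp, hj⟩, ?_⟩))
    simp

lemma hits_card : ∀ K : ℕ, ∀ S : Finset (ℕ × ℕ), Hits (2 ^ (K + 2)) S → 6 * 4 ^ K ≤ S.card := by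
  intro K
  induction K with
  | zero =>
    intro S h
    have h4 : Hits 4 S := by
      have : (2:ℕ) ^ (0 + 2) = 4 := by norm_num
      rwa [this] at h
    simpa using hits_four S h4
  | succ K ih =>
    intro S h
    have h' : Hits (2 ^ ((K + 2) + 1)) S := by
      have : (K + 1) + 2 = (K + 2) + 1 := by omega
      rwa [this] at h
    have e1 := ih _ (hits_q1 h')
    have e2 := ih _ (hits_q2 h')
    have e3 := ih _ (hits_q3 h')
    have e4 := ih _ (hits_q4 h')
    -- image cards
    have c2 : ((S.filter (fun p => 2 ^ (K + 2) ≤ p.1 ∧ 2 ^ (K + 2) ≤ p.2)).image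
        (fun p => (p.1 - 2 ^ (K + 2), p.2 - 2 ^ (K + 2)))).card = (S.filter (fun p => 2 ^ (K + 2) ≤ p.1 ∧ 2 ^ (K + 2) ≤ p.2)).card := by
      apply Finset.card_image_of_injOn
      intro p hp q hq hpq
      simp only [Finset.coe_filter, Set.mem_setOf_eq] at hp hq
      have := congrArg Prod.fst hpq
      have := congrArg Prod.snd hpq
      simp only at *
      exact Prod.ext (by omega) (by omega)
    have c3 : ((S.filter (fun p => p.1 < 2 ^ (K + 2) ∧ 2 ^ (K + 2) ≤ p.2)).image
        (fun p => (p.1, p.2 - 2 ^ (K + 2)))).card = (S.filter (fun p => p.1 < 2 ^ (K + 2) ∧ 2 ^ (K + 2) ≤ p.2)).card := by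
      apply Finset.card_image_of_injOn
      intro p hp q hq hpq
      simp only [Finset.coe_filter, Set.mem_setOf_eq] at hp hq
      have := congrArg Prod.fst hpq
      have := congrArg Prod.snd hpq
      simp only at *
      exact Prod.ext (by omega) (by omega)
    have c4 : ((S.filter (fun p => 2 ^ (K + 2) ≤ p.1 ∧ p.2 < 2 ^ (K + 2))).image
        (fun p => (p.1 - 2 ^ (K + 2), p.2))).card = (S.filter (fun p => 2 ^ (K + 2) ≤ p.1 ∧ p.2 < 2 ^ (K + 2))).card := by
      apply Finset.card_image_of_injOn
      intro p hp q hq hpq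
      simp only [Finset.coe_filter, Set.mem_setOf_eq] at hp hq
      have := congrArg Prod.fst hpq
      have := congrArg Prod.snd hpq
      simp only at *
      exact Prod.ext (by omega) (by omega)
    rw [c2] at e2; rw [c3] at e3; rw [c4] at e4
    -- partition of the card
    have hpart : (S.filter (fun p => p.1 < 2 ^ (K + 2) ∧ p.2 < 2 ^ (K + 2))).card
        + ((S.filter (fun p => p.1 < 2 ^ (K + 2) ∧ 2 ^ (K + 2) ≤ p.2)).card
        + ((S.filter (fun p => 2 ^ (K + 2) ≤ p.1 ∧ p.2 < 2 ^ (K + 2))).card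
        + (S.filter (fun p => 2 ^ (K + 2) ≤ p.1 ∧ 2 ^ (K + 2) ≤ p.2)).card)) = S.card := by
      rw [Finset.card_filter, Finset.card_filter, Finset.card_filter, Finset.card_filter,
        ← Finset.sum_add_distrib, ← Finset.sum_add_distrib, ← Finset.sum_add_distrib]
      rw [Finset.card_eq_sum_ones]
      apply Finset.sum_congr rfl
      intro p _
      rcases lt_or_ge p.1 (2 ^ (K + 2)) with h1 | h1 <;> rcases lt_or_ge p.2 (2 ^ (K + 2)) with h2 | h2 <;>
        simp [h1, h2, Nat.not_lt.mpr, Nat.not_le.mpr]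
    have : 6 * 4 ^ (K + 1) = 6 * 4 ^ K + (6 * 4 ^ K + (6 * 4 ^ K + 6 * 4 ^ K)) := by ring
    omega

/-- For `k ≥ 2`, every greedy defining set of `(L_k, lex)` has cardinality
at least `6n²/16 = (3/8)·4^k`, where `n = 2^k`. -/
theorem Lk_gds_lower_bound (k : ℕ) (hk : 2 ≤ k)
    (S : Finset (Fin (2 ^ k) × Fin (2 ^ k))) (hS : IsRectGDS (Lsquare k) ↑S) :
    6 * ((2 : ℝ) ^ k) ^ 2 / 16 = (3 / 8 : ℝ) * 4 ^ k ∧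
      6 * ((2 : ℝ) ^ k) ^ 2 / 16 ≤ (S.card : ℝ) := by
  have hpow : ((2 : ℝ) ^ k) ^ 2 = 4 ^ k := by
    rw [← pow_mul, mul_comm, pow_mul]
    norm_num
  constructor
  · rw [hpow]; ring
  · obtain ⟨K, rfl⟩ : ∃ K, k = K + 2 := ⟨k - 2, by omega⟩
    have hhits := gds_hits (K + 2) S hS
    have hcard := hits_card K _ hhits
    have himg : (S.image (fun p => (p.1.val, p.2.val))).card = S.card := by
      apply Finset.card_image_of_injective
      intro a b hab
      have e1 := congrArg Prod.fst hab
      have e2 := congrArg Prod.snd hab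
      simp only at e1 e2
      exact Prod.ext (Fin.ext e1) (Fin.ext e2)
    rw [himg] at hcard
    have heq : (6 : ℝ) * ((2 : ℝ) ^ (K + 2)) ^ 2 / 16 = ((6 * 4 ^ K : ℕ) : ℝ) := by
      rw [hpow, pow_add]
      push_cast
      ring
    rw [heq]
    exact_mod_cast Nat.cast_le.mpr hcard
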